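/- Let q be a prime, G a commutative group, and g : G an element with orderOf g = q. For a : ZMod q write g^a for g raised to the natural-number power a.val. Fix y : ZMod q and set Y = g^y. Let I be a finite index set and, for each i ∈ I, let e i, s i : ZMod q and R i : G satisfy the verification equation R i = Y^(e i) * g^(s i). Then the multiplicative aggregate of the commitments and the additive aggregates of the signature components again satisfy the verification equation: ∏_{i ∈ I} R i = Y^(∑_{i ∈ I} e i) * g^(∑_{i ∈ I} s i). (Correctness of POSLO-C.Agg/distillation: aggregating any collection of individually valid signatures—per message, per epoch, or per umbrella group—yields a valid aggregate signature.) -/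

import Mathlib

lemma poslo_key (q : ℕ) [Fact (Nat.Prime q)] {G : Type*} [CommGroup G]
    (g : G) (hg : orderOf g = q) (n : ℕ) :
    g ^ ((n : ZMod q)).val = g ^ n := by
  rw [pow_eq_pow_iff_modEq, hg, ZMod.val_natCast]
  exact (Nat.mod_modEq n q)

lemma poslo_hom (q : ℕ) [Fact (Nat.Prime q)] {G : Type*} [CommGroup G]
    (g : G) (hg : orderOf g = q) (a b : ZMod q) :
    g ^ (a + b).val = g ^ a.val * g ^ b.val := by
  have h : a + b = ((a.val + b.val : ℕ) : ZMod q) := by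
    push_cast [ZMod.natCast_val, ZMod.cast_id]; ring
  rw [h, poslo_key q g hg, pow_add]

lemma poslo_mul (q : ℕ) [Fact (Nat.Prime q)] {G : Type*} [CommGroup G]
    (g : G) (hg : orderOf g = q) (a b : ZMod q) :
    g ^ (a * b).val = (g ^ a.val) ^ b.val := by
  have h : a * b = ((a.val * b.val : ℕ) : ZMod q) := by
    push_cast [ZMod.natCast_val, ZMod.cast_id]; ring
  rw [h, poslo_key q g hg, pow_mul]

lemma poslo_prod (q : ℕ) [Fact (Nat.Prime q)] {G : Type*} [CommGroup G]
    (g : G) (hg : orderOf g = q) {ι : Type*} (I : Finset ι) (f : ι → ZMod q) :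
    ∏ i ∈ I, g ^ (f i).val = g ^ (∑ i ∈ I, f i).val := by
  classical
  induction I using Finset.induction_on with
  | empty => simp [ZMod.val_zero]
  | insert _ _ hi ih =>
    rename_i a T
    rw [Finset.prod_insert hi, Finset.sum_insert hi, poslo_hom q g hg, ih]

/-- Correctness of POSLO-C.Agg/distillation: aggregating any collection of
individually valid signatures yields a valid aggregate signature. -/
theorem poslo_c_agg_correct
    (q : ℕ) [Fact (Nat.Prime q)] {G : Type*} [CommGroup G]
    (g : G) (hg : orderOf g = q) (y : ZMod q)
    {ι : Type*} (I : Finset ι) (e s : ι → ZMod q) (R : ι → G)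
    (h : ∀ i ∈ I, R i = (g ^ y.val) ^ (e i).val * g ^ (s i).val) :
    ∏ i ∈ I, R i =
      (g ^ y.val) ^ (∑ i ∈ I, e i).val * g ^ (∑ i ∈ I, s i).val := by
  classical
  calc ∏ i ∈ I, R i = ∏ i ∈ I, g ^ (y * e i + s i).val := by
        refine Finset.prod_congr rfl fun i hi => ?_
        rw [h i hi, poslo_hom q g hg, poslo_mul q g hg]
    _ = g ^ (∑ i ∈ I, (y * e i + s i)).val := poslo_prod q g hg I _
    _ = g ^ (y * (∑ i ∈ I, e i) + ∑ i ∈ I, s i).val := by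
        rw [Finset.sum_add_distrib, ← Finset.mul_sum]
    _ = _ := by rw [poslo_hom q g hg, poslo_mul q g hg]
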